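/- For independent Bernoulli random variables b_1,...,b_n with parameters p_1,...,p_n, vectors x_1,...,x_n in R^d, and a positive semidefinite d×d matrix A, the expectation of det(∑_i b_i x_i x_iᵀ + A) equals det(∑_i p_i x_i x_iᵀ + A). -/

import Mathlib

open Matrix BigOperators

lemma det_add_smul_vecMulVec {d : ℕ} (M : Matrix (Fin d) (Fin d) ℝ) (v : Fin d → ℝ) (t : ℝ) :
    (M + t • vecMulVec v v).det
      = M.det + t * ∑ i, v i * (M.updateRow i v).det := by
  classical
  set m : Fin d → (Fin d → ℝ) := fun i => (t * v i) • v with hm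
  set m' : Fin d → (Fin d → ℝ) := fun i => M i with hm'
  have hrow : (M + t • vecMulVec v v) = Matrix.of (m + m') := by
    ext i j
    simp [m, m', vecMulVec_apply]
    ring
  have hdet : ∀ N : Matrix (Fin d) (Fin d) ℝ, N.det = Matrix.detRowAlternating N := fun _ => rfl
  have hexp := (Matrix.detRowAlternating (R := ℝ) (n := Fin d)).toMultilinearMap.map_add_univ m m'
  have hs : ∀ s : Finset (Fin d),
      Matrix.detRowAlternating (s.piecewise m m')
        = (if s = ∅ then M.det else 0)
          + ∑ i, (if s = {i} then (t * v i) * (M.updateRow i v).det else 0) := by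
    intro s
    rcases Finset.eq_empty_or_nonempty s with h | ⟨i, hi⟩
    · subst h
      rw [if_pos rfl, Finset.sum_eq_zero fun k _ =>
        if_neg (Ne.symm (Finset.singleton_ne_empty k))]
      simp [hdet]
      rfl
    · by_cases h1 : s = {i}
      · subst h1
        rw [Finset.sum_eq_single i (fun j _ hj => by simp [Finset.singleton_inj, (Ne.symm hj)])
          (by simp), if_neg (Finset.singleton_ne_empty i), if_pos rfl, zero_add]
        have h2 : ({i} : Finset (Fin d)).piecewise m m' = M.updateRow i ((t * v i) • v) := by
          ext a b
          rcases eq_or_ne a i with rfl | ha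
          · simp [m]
          · simp [m', Finset.piecewise, ha, Matrix.updateRow_ne ha]
        rw [h2, ← hdet, Matrix.det_updateRow_smul]
      · obtain ⟨j, hj, hji⟩ : ∃ j ∈ s, j ≠ i := by
          by_contra hcon
          push_neg at hcon
          exact h1 (Finset.eq_singleton_iff_unique_mem.2 ⟨hi, hcon⟩)
        have hz : (Matrix.detRowAlternating (s.piecewise m m') : ℝ) = 0 := by
          set P : Matrix (Fin d) (Fin d) ℝ := fun a => s.piecewise m m' a with hP
          have hPi : P i = (t * v i) • v := by simp [P, Finset.piecewise, hi, m]
          have hPj : P j = (t * v j) • v := by simp [P, Finset.piecewise, hj, m]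
          have h2 : P = P.updateRow i ((t * v i) • v) := by
            rw [← hPi, Matrix.updateRow_eq_self]
          have h4 : P.det = 0 := by
            rw [h2, Matrix.det_updateRow_smul]
            set Q := P.updateRow i v with hQ
            have hQj : Q j = (t * v j) • v := by
              rw [hQ, Matrix.updateRow_ne hji, hPj]
            have h3 : Q = Q.updateRow j ((t * v j) • v) := by
              rw [← hQj, Matrix.updateRow_eq_self]
            rw [h3, Matrix.det_updateRow_smul]
            have h5 : (Q.updateRow j v).det = 0 := by
              apply Matrix.det_zero_of_row_eq hji.symm
              rw [Matrix.updateRow_ne hji.symm, Matrix.updateRow_self, hQ,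
                Matrix.updateRow_self]
            rw [h5]; ring
          exact (hdet P).symm.trans h4
        rw [hz, if_neg (by rintro rfl; exact absurd hi (by simp)),
          Finset.sum_eq_zero (fun k _ => if_neg
            (by rintro rfl; simp only [Finset.mem_singleton] at hi hj; exact hji (hj.trans hi.symm)))]
        ring
  calc (M + t • vecMulVec v v).det
      = ∑ s : Finset (Fin d), Matrix.detRowAlternating (s.piecewise m m') := by
        rw [hrow]; exact hexp
    _ = ∑ s : Finset (Fin d), ((if s = ∅ then M.det else 0)
          + ∑ i, (if s = {i} then (t * v i) * (M.updateRow i v).det else 0)) :=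
        Finset.sum_congr rfl fun s _ => hs s
    _ = M.det + t * ∑ i, v i * (M.updateRow i v).det := by
        rw [Finset.sum_add_distrib, Finset.sum_ite_eq' Finset.univ ∅ (fun _ => M.det),
          Finset.sum_comm]
        have h6 : ∀ i : Fin d,
            (∑ s : Finset (Fin d), if s = {i} then (t * v i) * (M.updateRow i v).det else 0)
              = (t * v i) * (M.updateRow i v).det := by
          intro i
          rw [Finset.sum_ite_eq' Finset.univ ({i} : Finset (Fin d))
            (fun _ => (t * v i) * (M.updateRow i v).det)]
          simp
        rw [Finset.sum_congr rfl fun i _ => h6 i]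
        simp [Finset.mul_sum]
        ring_nf

lemma bernoulli_det_key (n : ℕ) : ∀ (d : ℕ) (x : Fin n → (Fin d → ℝ)) (p : Fin n → ℝ)
    (A : Matrix (Fin d) (Fin d) ℝ),
    ∑ b : Fin n → Bool,
        (∏ i, (if b i then p i else 1 - p i)) *
          (∑ i, (if b i then (1 : ℝ) else 0) • vecMulVec (x i) (x i) + A).det
      = (∑ i, p i • vecMulVec (x i) (x i) + A).det := by
  induction n with
  | zero => intro d x p A; simp
  | succ n ih =>
    intro d x p A
    rw [← (Fin.consEquiv (fun _ : Fin (n+1) => Bool)).sum_comp, Fintype.sum_prod_type]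
    have hsplit : ∀ (c : Bool) (b : Fin n → Bool),
        (∏ i, (if (Fin.cons c b : Fin (n+1) → Bool) i then p i else 1 - p i)) *
          (∑ i, (if (Fin.cons c b : Fin (n+1) → Bool) i then (1 : ℝ) else 0) •
            vecMulVec (x i) (x i) + A).det
        = (if c then p 0 else 1 - p 0) *
          ((∏ i, (if b i then p i.succ else 1 - p i.succ)) *
            (∑ i, (if b i then (1 : ℝ) else 0) • vecMulVec (x i.succ) (x i.succ)
              + ((if c then (1 : ℝ) else 0) • vecMulVec (x 0) (x 0) + A)).det) := by
      intro c b
      rw [Fin.prod_univ_succ, Fin.sum_univ_succ]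
      simp only [Fin.cons_zero, Fin.cons_succ]
      rw [mul_assoc]
      congr 2
      abel
    simp only [Fin.consEquiv_apply]
    calc ∑ c : Bool, ∑ b : Fin n → Bool,
          (∏ i, (if (Fin.cons c b : Fin (n+1) → Bool) i then p i else 1 - p i)) *
            (∑ i, (if (Fin.cons c b : Fin (n+1) → Bool) i then (1 : ℝ) else 0) •
              vecMulVec (x i) (x i) + A).det
        = ∑ c : Bool, (if c then p 0 else 1 - p 0) *
            (∑ i : Fin n, p i.succ • vecMulVec (x i.succ) (x i.succ)
              + ((if c then (1 : ℝ) else 0) • vecMulVec (x 0) (x 0) + A)).det := by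
          refine Finset.sum_congr rfl fun c _ => ?_
          rw [Finset.sum_congr rfl fun b _ => hsplit c b, ← Finset.mul_sum,
            ih d (fun i => x i.succ) (fun i => p i.succ)
              ((if c then (1 : ℝ) else 0) • vecMulVec (x 0) (x 0) + A)]
      _ = (∑ i, p i • vecMulVec (x i) (x i) + A).det := by
          rw [Fin.sum_univ_succ]
          set M : Matrix (Fin d) (Fin d) ℝ :=
            ∑ i : Fin n, p i.succ • vecMulVec (x i.succ) (x i.succ) + A with hM
          have hre : ∀ t : ℝ, (∑ i : Fin n, p i.succ • vecMulVec (x i.succ) (x i.succ)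
              + (t • vecMulVec (x 0) (x 0) + A)) = M + t • vecMulVec (x 0) (x 0) := by
            intro t; rw [hM]; abel
          have hre2 : (p 0 • vecMulVec (x 0) (x 0)
              + ∑ i : Fin n, p i.succ • vecMulVec (x i.succ) (x i.succ) + A)
              = M + p 0 • vecMulVec (x 0) (x 0) := by rw [hM]; abel
          rw [Fintype.sum_bool]
          simp only [if_true, Bool.false_eq_true, if_false, hre, hre2]
          rw [det_add_smul_vecMulVec, det_add_smul_vecMulVec, det_add_smul_vecMulVec]
          ring

/-- Expectation over independent Bernoulli variables `b i` of the determinant. -/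
theorem bernoulli_expectation_det
    (n d : ℕ) (x : Fin n → (Fin d → ℝ)) (p : Fin n → ℝ)
    (hp : ∀ i, p i ∈ Set.Icc (0 : ℝ) 1)
    (A : Matrix (Fin d) (Fin d) ℝ) (hA : A.PosSemidef) :
    ∑ b : Fin n → Bool,
        (∏ i, (if b i then p i else 1 - p i)) *
          (∑ i, (if b i then (1 : ℝ) else 0) • vecMulVec (x i) (x i) + A).det
      = (∑ i, p i • vecMulVec (x i) (x i) + A).det :=
  bernoulli_det_key n d x p A
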